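/- Let R be a commutative ring with 1/2 ∈ R. Then the kernel of the natural map K^M_{n+1}(R[ε]) → K^M_{n+1}(R) induced by ε ↦ 0 is a uniquely 2-divisible abelian group. -/

import Mathlib

open TrivSqZeroExt

/-- The relations defining the Milnor K-group of a commutative ring `S`:
multilinearity relations and Steinberg relations (a generator `r₁ ⊗ … ⊗ r_n` with some
pair of consecutive entries summing to `1`). -/
def milnorRelSet (S : Type*) [CommRing S] (n : ℕ) : Set (FreeAbelianGroup (Fin n → Sˣ)) :=
  {x | ∃ (f : Fin n → Sˣ) (i : Fin n) (u v : Sˣ),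
      x = FreeAbelianGroup.of (Function.update f i (u * v))
        - FreeAbelianGroup.of (Function.update f i u)
        - FreeAbelianGroup.of (Function.update f i v)} ∪
  {x | ∃ (f : Fin n → Sˣ) (i j : Fin n), (i : ℕ) + 1 = (j : ℕ) ∧
      ((f i : S) + (f j : S) = 1) ∧ x = FreeAbelianGroup.of f}

/-- The `n`-th Milnor K-group of a commutative ring `S`: the quotient of `(Sˣ)^{⊗ n}`
(presented as the free abelian group on `n`-tuples of units, modulo multilinearity)
by the Steinberg relations. -/
def MilnorK (S : Type*) [CommRing S] (n : ℕ) : Type _ :=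
  FreeAbelianGroup (Fin n → Sˣ) ⧸ AddSubgroup.closure (milnorRelSet S n)

instance (S : Type*) [CommRing S] (n : ℕ) : AddCommGroup (MilnorK S n) :=
  QuotientAddGroup.Quotient.addCommGroup _

/-- The Milnor symbol `{r₁, …, r_n}`. -/
def milnorSymbol {S : Type*} [CommRing S] {n : ℕ} (f : Fin n → Sˣ) : MilnorK S n :=
  QuotientAddGroup.mk (FreeAbelianGroup.of f)

/-- Functoriality of Milnor K-groups in ring homomorphisms. -/
def MilnorK.map {S T : Type*} [CommRing S] [CommRing T] (φ : S →+* T) (n : ℕ) :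
    MilnorK S n →+ MilnorK T n := by
  refine QuotientAddGroup.lift _
    ((QuotientAddGroup.mk' (AddSubgroup.closure (milnorRelSet T n))).comp
      (FreeAbelianGroup.map (fun f => (Units.map (φ : S →* T)) ∘ f))) ?_
  intro x hx
  revert x hx
  rw [← SetLike.le_def, AddSubgroup.closure_le]
  rintro x (⟨f, i, u, v, rfl⟩ | ⟨f, i, j, hij, hsum, rfl⟩) <;>
    simp only [SetLike.mem_coe, AddMonoidHom.mem_ker, map_sub]
  · show milnorSymbol (Units.map (φ : S →* T) ∘ Function.update f i (u * v))
      - milnorSymbol (Units.map (φ : S →* T) ∘ Function.update f i u)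
      - milnorSymbol (Units.map (φ : S →* T) ∘ Function.update f i v) = (0 : MilnorK T n)
    unfold milnorSymbol
    change ((_ : FreeAbelianGroup (Fin n → Tˣ)) : FreeAbelianGroup (Fin n → Tˣ) ⧸
      AddSubgroup.closure (milnorRelSet T n)) - _ - _ = 0
    rw [← QuotientAddGroup.mk_sub, ← QuotientAddGroup.mk_sub, QuotientAddGroup.eq_zero_iff]
    refine AddSubgroup.subset_closure (Or.inl ⟨Units.map (φ : S →* T) ∘ f, i,
      Units.map (φ : S →* T) u, Units.map (φ : S →* T) v, ?_⟩)
    simp [Function.comp_update]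
  · show milnorSymbol (Units.map (φ : S →* T) ∘ f) = (0 : MilnorK T n)
    unfold milnorSymbol
    change ((_ : FreeAbelianGroup (Fin n → Tˣ)) : FreeAbelianGroup (Fin n → Tˣ) ⧸
      AddSubgroup.closure (milnorRelSet T n)) = 0
    rw [QuotientAddGroup.eq_zero_iff]
    refine AddSubgroup.subset_closure (Or.inr ⟨Units.map (φ : S →* T) ∘ f, i, j, hij, ?_, rfl⟩)
    simp only [Function.comp_apply, Units.coe_map, MonoidHom.coe_coe]
    rw [← map_add, hsum, map_one]

/-- The unit `1 + r·ε` of the dual numbers, with inverse `1 - r·ε`. -/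
def oneAddEps (R : Type*) [CommRing R] (r : R) : (DualNumber R)ˣ where
  val := 1 + inr r
  inv := 1 - inr r
  val_inv := by
    have h : (inr r : DualNumber R) * inr r = 0 := inr_mul_inr R r r
    ring_nf
    simp [pow_two, h]
  inv_val := by
    have h : (inr r : DualNumber R) * inr r = 0 := inr_mul_inr R r r
    ring_nf
    simp [pow_two, h]

/-- The `R`-algebra endomorphism `σ_a` of the dual numbers sending `ε` to `a·ε`. -/
def epsScale (R : Type*) [CommRing R] (a : R) : DualNumber R →+* DualNumber R where
  toFun x := inl x.fst + inr (a * x.snd)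
  map_one' := by simp
  map_mul' x y := by
    ext
    · simp
    · simp [snd_mul, smul_eq_mul, mul_comm, mul_add]
      ring
  map_zero' := by simp
  map_add' x y := by ext <;> simp [mul_add]


section MilnorLemmas

variable {S : Type*} [CommRing S] {m : ℕ}

theorem milnorSymbol_update_mul (f : Fin m → Sˣ) (i : Fin m) (u v : Sˣ) :
    milnorSymbol (Function.update f i (u * v)) =
      milnorSymbol (Function.update f i u) + milnorSymbol (Function.update f i v) := by
  have h : (FreeAbelianGroup.of (Function.update f i (u * v))
        - FreeAbelianGroup.of (Function.update f i u)
        - FreeAbelianGroup.of (Function.update f i v)) ∈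
      AddSubgroup.closure (milnorRelSet S m) :=
    AddSubgroup.subset_closure (Or.inl ⟨f, i, u, v, rfl⟩)
  have h2 := (QuotientAddGroup.eq_zero_iff _).2 h
  have h3 : milnorSymbol (Function.update f i (u * v))
      - milnorSymbol (Function.update f i u)
      - milnorSymbol (Function.update f i v) = (0 : MilnorK S m) := by
    unfold milnorSymbol
    change ((_ : FreeAbelianGroup (Fin m → Sˣ)) : FreeAbelianGroup (Fin m → Sˣ) ⧸
      AddSubgroup.closure (milnorRelSet S m)) - _ - _ = 0
    rw [← QuotientAddGroup.mk_sub, ← QuotientAddGroup.mk_sub]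
    exact h2
  rw [sub_sub, sub_eq_zero] at h3
  exact h3

theorem milnorSymbol_eq_zero_of_one (f : Fin m → Sˣ) (i : Fin m) (hf : f i = 1) :
    milnorSymbol f = (0 : MilnorK S m) := by
  have h := milnorSymbol_update_mul f i 1 1
  rw [one_mul] at h
  have hup : Function.update f i (1 : Sˣ) = f := by
    funext j
    rcases eq_or_ne j i with rfl | hj
    · rw [Function.update_self, hf]
    · rw [Function.update_of_ne hj]
  rw [hup] at h
  exact (left_eq_add.mp h)

end MilnorLemmas
section Functoriality

variable {S T : Type*} [CommRing S] [CommRing T] {m : ℕ}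

theorem MilnorK.hom_ext {A : Type*} [AddCommGroup A] {F G : MilnorK S m →+ A}
    (h : ∀ f : Fin m → Sˣ, F (milnorSymbol f) = G (milnorSymbol f)) : F = G := by
  ext x
  induction x using QuotientAddGroup.induction_on with
  | H z =>
    induction z using FreeAbelianGroup.induction_on with
    | zero => exact (map_zero F).trans (map_zero G).symm
    | of f => exact h f
    | neg f hf =>
      rw [QuotientAddGroup.mk_neg]
      exact (map_neg F (_ : MilnorK S m)).trans ((congrArg Neg.neg hf).trans (map_neg G _).symm)
    | add a b ha hb =>
      rw [QuotientAddGroup.mk_add]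
      exact (map_add F (_ : MilnorK S m) _).trans
        ((congrArg₂ (· + ·) ha hb).trans (map_add G _ _).symm)

theorem MilnorK.map_symbol (φ : S →+* T) (f : Fin m → Sˣ) :
    MilnorK.map φ m (milnorSymbol f) = milnorSymbol (Units.map (φ : S →* T) ∘ f) := by
  rfl

end Functoriality
section DualUnits

variable (R : Type*) [CommRing R]

/-- The unit `inl u` of the dual numbers. -/
def inlUnit : Rˣ →* (DualNumber R)ˣ :=
  Units.map (TrivSqZeroExt.inlHom R R : R →+* DualNumber R)

variable {R}

@[simp] theorem inlUnit_val (u : Rˣ) : ((inlUnit R u : (DualNumber R)ˣ) : DualNumber R)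
    = inl (u : R) := rfl

@[simp] theorem oneAddEps_val (r : R) : ((oneAddEps R r : (DualNumber R)ˣ) : DualNumber R)
    = 1 + inr r := rfl

@[simp] theorem epsScale_apply (a : R) (x : DualNumber R) :
    epsScale R a x = inl x.fst + inr (a * x.snd) := rfl

theorem oneAddEps_mul (r s : R) :
    oneAddEps R r * oneAddEps R s = oneAddEps R (r + s) := by
  apply Units.ext
  show ((1 : DualNumber R) + inr r) * (1 + inr s) = 1 + inr (r + s)
  have h : (inr r : DualNumber R) * inr s = 0 := inr_mul_inr R r s
  rw [mul_add, mul_one, add_mul, one_mul, h, add_zero, inr_add, add_assoc]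

theorem oneAddEps_sq (r : R) :
    oneAddEps R r * oneAddEps R r = oneAddEps R (2 * r) := by
  rw [oneAddEps_mul, two_mul]

theorem epsScale_comp (a b : R) :
    (epsScale R a).comp (epsScale R b) = epsScale R (a * b) := by
  refine RingHom.ext fun x => ?_
  show epsScale R a (epsScale R b x) = epsScale R (a * b) x
  ext <;> simp [mul_assoc]

theorem epsScale_one : epsScale R (1 : R) = RingHom.id (DualNumber R) := by
  refine RingHom.ext fun x => ?_
  show epsScale R 1 x = x
  rw [epsScale_apply, one_mul, inl_fst_add_inr_snd_eq]

theorem fstHom_comp_epsScale (a : R) :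
    ((TrivSqZeroExt.fstHom R R R).toRingHom).comp (epsScale R a)
      = (TrivSqZeroExt.fstHom R R R).toRingHom := by
  refine RingHom.ext fun x => ?_
  show (epsScale R a x).fst = x.fst
  simp

theorem epsScale_units_oneAddEps (a r : R) :
    Units.map ((epsScale R a : DualNumber R →+* DualNumber R) : DualNumber R →* DualNumber R)
      (oneAddEps R r) = oneAddEps R (a * r) := by
  apply Units.ext
  show epsScale R a ((1 : DualNumber R) + inr r) = 1 + inr (a * r)
  ext <;> simp

theorem epsScale_units_inlUnit (a : R) (u : Rˣ) :
    Units.map ((epsScale R a : DualNumber R →+* DualNumber R) : DualNumber R →* DualNumber R)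
      (inlUnit R u) = inlUnit R u := by
  apply Units.ext
  show epsScale R a (inl (u : R)) = inl (u : R)
  ext <;> simp

/-- The residue unit in `R` of a dual-number unit. -/
noncomputable def fstU (w : (DualNumber R)ˣ) : Rˣ :=
  Units.map ((TrivSqZeroExt.fstHom R R R).toRingHom : DualNumber R →* R) w

@[simp] theorem fstU_val (w : (DualNumber R)ˣ) : ((fstU w : Rˣ) : R) = fst (w : DualNumber R) :=
  rfl

/-- Decomposition of a unit of the dual numbers. -/
theorem units_decomp (w : (DualNumber R)ˣ) :
    w = inlUnit R (fstU w) * oneAddEps R ((((fstU w)⁻¹ : Rˣ) : R) * snd (w : DualNumber R)) := by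
  apply Units.ext
  show (w : DualNumber R)
      = inl ((fstU w : Rˣ) : R) * (1 + inr ((((fstU w)⁻¹ : Rˣ) : R) * snd (w : DualNumber R)))
  conv_lhs => rw [← inl_fst_add_inr_snd_eq (w : DualNumber R)]
  rw [mul_add, mul_one, inl_mul_inr, smul_eq_mul, ← mul_assoc, Units.mul_inv, one_mul, fstU_val]

end DualUnits
section Abstract

variable {G : Type*} [AddCommGroup G] (σ : G ≃+ G)

/-- The eigenspace of `σ` with eigenvalue `2^k`. -/
def eigenSp (k : ℕ) : AddSubgroup G where
  carrier := {g | σ g = (2 : ℤ) ^ k • g}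
  add_mem' := by
    intro a b ha hb
    simp only [Set.mem_setOf_eq] at *
    rw [map_add, ha, hb, smul_add]
  zero_mem' := by simp
  neg_mem' := by
    intro a ha
    simp only [Set.mem_setOf_eq] at *
    rw [map_neg, ha, smul_neg]

theorem eigenSp_sigma_mem {k : ℕ} {g : G} (hg : g ∈ eigenSp σ k) : σ g ∈ eigenSp σ k := by
  have : σ g = (2 : ℤ) ^ k • g := hg
  show σ (σ g) = (2 : ℤ) ^ k • σ g
  simp only [this, map_zsmul]

/-- The filtration `eigenSp 1 ⊔ … ⊔ eigenSp m`. -/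
def eigenFilt : ℕ → AddSubgroup G
  | 0 => ⊥
  | m + 1 => eigenFilt m ⊔ eigenSp σ (m + 1)

theorem eigenFilt_mono {m m' : ℕ} (h : m ≤ m') : eigenFilt σ m ≤ eigenFilt σ m' := by
  induction m' with
  | zero => rw [Nat.le_zero.mp h]
  | succ k ih =>
    rcases Nat.lt_or_ge m (k + 1) with h' | h'
    · exact le_trans (ih (Nat.lt_succ_iff.mp h')) le_sup_left
    · rw [Nat.le_antisymm h h']

theorem eigenSp_le_eigenFilt {k : ℕ} (hk : 1 ≤ k) : eigenSp σ k ≤ eigenFilt σ k := by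
  obtain ⟨m, rfl⟩ := Nat.exists_eq_add_of_le' hk
  exact le_sup_right (a := eigenFilt σ m)

theorem eigenFilt_sigma_mem : ∀ m : ℕ, ∀ g ∈ eigenFilt σ m, σ g ∈ eigenFilt σ m := by
  intro m
  induction m with
  | zero => intro g hg; rw [AddSubgroup.mem_bot.mp hg, map_zero]; exact AddSubgroup.zero_mem _
  | succ k ih =>
    intro g hg
    rw [eigenFilt, AddSubgroup.mem_sup] at hg ⊢
    obtain ⟨a, ha, b, hb, rfl⟩ := hg
    exact ⟨σ a, ih a ha, σ b, eigenSp_sigma_mem σ hb, (map_add σ a b).symm⟩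

theorem eigenFilt_torsion_free : ∀ m : ℕ, ∀ t ∈ eigenFilt σ m, (2 : ℤ) • t = 0 → t = 0 := by
  intro m
  induction m with
  | zero => intro t ht _; exact AddSubgroup.mem_bot.mp ht
  | succ k ih =>
    intro t ht h2
    rw [eigenFilt, AddSubgroup.mem_sup] at ht
    obtain ⟨a, ha, b, hb, rfl⟩ := ht
    have hb' : σ b = (2 : ℤ) ^ (k + 1) • b := hb
    have hpow : (2 : ℤ) ^ (k + 1) • (a + b) = 0 := by
      have : (2 : ℤ) ^ (k + 1) = 2 ^ k * 2 := by ring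
      rw [this, mul_smul, h2, smul_zero]
    have hσt : σ (a + b) = σ a - (2 : ℤ) ^ (k + 1) • a := by
      have : σ (a + b) = σ (a + b) - (2 : ℤ) ^ (k + 1) • (a + b) := by
        rw [hpow, sub_zero]
      rw [this, map_add, hb', smul_add]
      abel
    have hσt_mem : σ (a + b) ∈ eigenFilt σ k := by
      rw [hσt]
      exact AddSubgroup.sub_mem _ (eigenFilt_sigma_mem σ k a ha)
        (AddSubgroup.zsmul_mem _ ha _)
    have hσt2 : (2 : ℤ) • σ (a + b) = 0 := by rw [← map_zsmul, h2, map_zero]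
    have := ih _ hσt_mem hσt2
    have : σ (a + b) = σ 0 := by rw [map_zero]; exact this
    exact σ.injective this

/-- Abstract lemma: a group generated by eigenvectors of an automorphism with
eigenvalues `2^k`, `k ≥ 1`, is uniquely 2-divisible. -/
theorem abstract_two_divisible (S : Set G) (H : AddSubgroup G)
    (hHS : H = AddSubgroup.closure S)
    (heig : ∀ x ∈ S, ∃ k : ℕ, 1 ≤ k ∧ σ x = (2 : ℤ) ^ k • x)
    (hsymm : ∀ x ∈ H, σ.symm x ∈ H) :
    Function.Bijective (fun x : H => (2 : ℤ) • x) := by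
  -- the union of the filtration
  have hSfilt : ∀ x ∈ S, ∃ m, x ∈ eigenFilt σ m := by
    intro x hx
    obtain ⟨k, hk1, hk⟩ := heig x hx
    exact ⟨k, eigenSp_le_eigenFilt σ hk1 hk⟩
  let K : AddSubgroup G :=
    { carrier := {g | ∃ m, g ∈ eigenFilt σ m}
      add_mem' := by
        rintro a b ⟨ma, hma⟩ ⟨mb, hmb⟩
        exact ⟨max ma mb, AddSubgroup.add_mem _
          (eigenFilt_mono σ (le_max_left _ _) hma)
          (eigenFilt_mono σ (le_max_right _ _) hmb)⟩
      zero_mem' := ⟨0, AddSubgroup.zero_mem _⟩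
      neg_mem' := by
        rintro a ⟨ma, hma⟩
        exact ⟨ma, AddSubgroup.neg_mem _ hma⟩ }
  have hHK : H ≤ K := by
    rw [hHS]
    exact AddSubgroup.closure_le K |>.mpr hSfilt
  constructor
  · -- injectivity
    intro x y hxy
    have h2 : (2 : ℤ) • ((x : G) - y) = 0 := by
      have := congrArg (fun z : H => ((z : H) : G)) hxy
      simp only [AddSubgroup.coe_zsmul] at this
      rw [smul_sub]
      rw [sub_eq_zero]
      exact this
    obtain ⟨m, hm⟩ := hHK (AddSubgroup.sub_mem H x.2 y.2)
    have := eigenFilt_torsion_free σ m _ hm h2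
    exact Subtype.ext (sub_eq_zero.mp this)
  · -- surjectivity
    intro x
    -- the image of H under multiplication by 2
    let M : G →+ G := AddMonoidHom.mk' (fun g => (2 : ℤ) • g) (fun a b => smul_add 2 a b)
    have hSM : S ⊆ (H.map M : Set G) := by
      intro s hs
      obtain ⟨k, hk1, hk⟩ := heig s hs
      have hsH : s ∈ H := hHS ▸ AddSubgroup.subset_closure hs
      have hsymm_s : σ.symm s ∈ H := hsymm s hsH
      have hdiv : s = (2 : ℤ) ^ k • σ.symm s := by
        conv_lhs => rw [← σ.apply_symm_apply s]
        have : σ (σ.symm s) = s := σ.apply_symm_apply s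
        calc σ (σ.symm s) = σ.symm (σ s) := by rw [this, σ.symm_apply_apply]
        _ = σ.symm ((2 : ℤ) ^ k • s) := by rw [hk]
        _ = (2 : ℤ) ^ k • σ.symm s := map_zsmul σ.symm.toAddMonoidHom _ _
      obtain ⟨j, rfl⟩ := Nat.exists_eq_add_of_le' hk1
      refine ⟨(2 : ℤ) ^ j • σ.symm s, AddSubgroup.zsmul_mem _ hsymm_s _, ?_⟩
      show (2 : ℤ) • (2 : ℤ) ^ j • σ.symm s = s
      rw [← mul_smul]
      conv_rhs => rw [hdiv]
      congr 1
      ring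
    have hHM : H ≤ H.map M := hHS.le.trans ((AddSubgroup.closure_le _).mpr hSM)
    obtain ⟨y, hy, hyx⟩ := hHM x.2
    exact ⟨⟨y, hy⟩, Subtype.ext hyx⟩

end Abstract
section Concrete

variable {R : Type*} [CommRing R] {m : ℕ}

/-- Functoriality: composition. -/
theorem MilnorK.map_comp {S T U : Type*} [CommRing S] [CommRing T] [CommRing U]
    (φ : T →+* U) (ψ : S →+* T) (m : ℕ) :
    (MilnorK.map φ m).comp (MilnorK.map ψ m) = MilnorK.map (φ.comp ψ) m := by
  refine MilnorK.hom_ext fun f => ?_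
  rw [AddMonoidHom.comp_apply, MilnorK.map_symbol, MilnorK.map_symbol, MilnorK.map_symbol]
  congr 1

/-- Functoriality: identity. -/
theorem MilnorK.map_id (S : Type*) [CommRing S] (m : ℕ) :
    MilnorK.map (RingHom.id S) m = AddMonoidHom.id (MilnorK S m) := by
  refine MilnorK.hom_ext fun f => ?_
  rw [MilnorK.map_symbol, AddMonoidHom.id_apply]
  congr 1

variable (R m) in
/-- The projection `K^M(R[ε]) → K^M(R)`. -/
noncomputable def pK : MilnorK (DualNumber R) m →+ MilnorK R m :=
  MilnorK.map (TrivSqZeroExt.fstHom R R R).toRingHom m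

variable (R m) in
/-- The section `K^M(R) → K^M(R[ε])`. -/
noncomputable def jK : MilnorK R m →+ MilnorK (DualNumber R) m :=
  MilnorK.map (TrivSqZeroExt.inlHom R R) m

theorem pK_comp_jK : (pK R m).comp (jK R m) = AddMonoidHom.id (MilnorK R m) := by
  rw [pK, jK, MilnorK.map_comp]
  have : ((TrivSqZeroExt.fstHom R R R).toRingHom).comp (TrivSqZeroExt.inlHom R R)
      = RingHom.id R := by
    ext x; rfl
  rw [this, MilnorK.map_id]

variable (R m) in
/-- The generating set of mixed symbols. -/
def mixedSet : Set (MilnorK (DualNumber R) m) :=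
  {x | ∃ (f : Fin m → (DualNumber R)ˣ) (T : Finset (Fin m)), T.Nonempty ∧
    (∀ i ∈ T, ∃ r : R, f i = oneAddEps R r) ∧ (∀ i ∉ T, ∃ u : Rˣ, f i = inlUnit R u) ∧
    x = milnorSymbol f}

theorem symbol_scale (T : Finset (Fin m)) :
    ∀ f g : Fin m → (DualNumber R)ˣ,
    (∀ i ∈ T, ∃ r : R, f i = oneAddEps R r ∧ g i = oneAddEps R (2 * r)) →
    (∀ i ∉ T, g i = f i) →
    milnorSymbol g = (2 : ℤ) ^ T.card • milnorSymbol f := by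
  classical
  induction T using Finset.induction_on with
  | empty =>
    intro f g _ h
    have : g = f := funext fun i => h i (Finset.notMem_empty i)
    rw [this, Finset.card_empty, pow_zero, one_smul]
  | @insert a T ha ih =>
    intro f g hT hT'
    obtain ⟨r, hfa, hga⟩ := hT a (Finset.mem_insert_self a T)
    set h : Fin m → (DualNumber R)ˣ := Function.update g a (f a) with hh
    have hhsymb : milnorSymbol h = (2 : ℤ) ^ T.card • milnorSymbol f := by
      refine ih f h (fun i hi => ?_) (fun i hi => ?_)
      · have hia : i ≠ a := fun e => ha (e ▸ hi)
        obtain ⟨s, hfs, hgs⟩ := hT i (Finset.mem_insert_of_mem hi)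
        exact ⟨s, hfs, by rw [hh, Function.update_of_ne hia]; exact hgs⟩
      · rcases eq_or_ne i a with rfl | hia
        · rw [hh, Function.update_self]
        · rw [hh, Function.update_of_ne hia]
          exact hT' i (by simp [hia, hi])
    have hgud : g = Function.update h a (oneAddEps R r * oneAddEps R r) := by
      funext i
      rcases eq_or_ne i a with rfl | hia
      · rw [Function.update_self, oneAddEps_sq, hga]
      · rw [Function.update_of_ne hia, hh, Function.update_of_ne hia]
    have hupd : Function.update h a (oneAddEps R r) = h := by
      funext i
      rcases eq_or_ne i a with rfl | hia
      · rw [Function.update_self, hh, Function.update_self, hfa]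
      · rw [Function.update_of_ne hia]
    rw [hgud, milnorSymbol_update_mul, hupd, hhsymb,
      Finset.card_insert_of_notMem ha]
    rw [← two_smul ℤ]
    rw [smul_smul]
    congr 1
    ring

theorem units_map_fst_oneAddEps (r : R) :
    Units.map (((TrivSqZeroExt.fstHom R R R).toRingHom : DualNumber R →+* R) :
      DualNumber R →* R) (oneAddEps R r) = 1 := by
  ext
  show fst ((1 : DualNumber R) + inr r) = 1
  simp

theorem units_map_fst_inlUnit (u : Rˣ) :
    Units.map (((TrivSqZeroExt.fstHom R R R).toRingHom : DualNumber R →+* R) :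
      DualNumber R →* R) (inlUnit R u) = u := by
  ext
  show fst (inl (u : R) : DualNumber R) = u
  simp

theorem mixedSet_subset_ker : mixedSet R m ⊆ ((pK R m).ker : Set (MilnorK (DualNumber R) m)) := by
  rintro x ⟨f, T, ⟨i₀, hi₀⟩, hTε, _, rfl⟩
  obtain ⟨r, hr⟩ := hTε i₀ hi₀
  show pK R m (milnorSymbol f) = 0
  rw [pK, MilnorK.map_symbol]
  refine milnorSymbol_eq_zero_of_one _ i₀ ?_
  show Units.map _ (f i₀) = 1
  rw [hr]
  exact units_map_fst_oneAddEps r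

end Concrete
section Generation

variable {R : Type*} [CommRing R] {m : ℕ}

variable (R m) in
/-- The retraction onto the kernel. -/
noncomputable def rhoK : MilnorK (DualNumber R) m →+ MilnorK (DualNumber R) m :=
  AddMonoidHom.id _ - (jK R m).comp (pK R m)

theorem rhoK_apply (x : MilnorK (DualNumber R) m) : rhoK R m x = x - jK R m (pK R m x) := rfl

theorem rhoK_symbol_mem (T : Finset (Fin m)) :
    ∀ v : Fin m → (DualNumber R)ˣ,
    (∀ i, i ∉ T → (∃ u : Rˣ, v i = inlUnit R u) ∨ (∃ r : R, v i = oneAddEps R r)) →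
    rhoK R m (milnorSymbol v) ∈ AddSubgroup.closure (mixedSet R m) := by
  classical
  induction T using Finset.induction_on with
  | empty =>
    intro v hv
    set T' : Finset (Fin m) :=
      Finset.univ.filter (fun i => ¬ ∃ u : Rˣ, v i = inlUnit R u) with hT'
    have hT'ε : ∀ i ∈ T', ∃ r : R, v i = oneAddEps R r := by
      intro i hi
      rw [hT', Finset.mem_filter] at hi
      rcases hv i (Finset.notMem_empty i) with h | h
      · exact absurd h hi.2
      · exact h
    have hT'l : ∀ i ∉ T', ∃ u : Rˣ, v i = inlUnit R u := by
      intro i hi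
      rw [hT', Finset.mem_filter] at hi
      push_neg at hi
      exact hi (Finset.mem_univ i)
    rcases T'.eq_empty_or_nonempty with hemp | hne
    · -- all entries are `inl`; ρ(symbol) = 0
      have hpj : jK R m (pK R m (milnorSymbol v)) = milnorSymbol v := by
        rw [pK, MilnorK.map_symbol, jK, MilnorK.map_symbol]
        congr 1
        funext i
        obtain ⟨u, hu⟩ := hT'l i (by rw [hemp]; exact Finset.notMem_empty i)
        show Units.map _ (Units.map _ (v i)) = v i
        rw [hu]
        rw [units_map_fst_inlUnit]
        rfl
      rw [rhoK_apply, hpj, sub_self]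
      exact AddSubgroup.zero_mem _
    · -- mixed symbol
      have hmem : milnorSymbol v ∈ mixedSet R m := ⟨v, T', hne, hT'ε, hT'l, rfl⟩
      have hker : pK R m (milnorSymbol v) = 0 := mixedSet_subset_ker hmem
      rw [rhoK_apply, hker, map_zero, sub_zero]
      exact AddSubgroup.subset_closure hmem
  | @insert a T ha ih =>
    intro v hv
    have hdec := units_decomp (v a)
    set u₀ : Rˣ := fstU (v a)
    set r₀ : R := (((fstU (v a))⁻¹ : Rˣ) : R) * snd ((v a : DualNumber R))
    have hsplit : milnorSymbol v =
        milnorSymbol (Function.update v a (inlUnit R u₀))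
          + milnorSymbol (Function.update v a (oneAddEps R r₀)) := by
      conv_lhs => rw [← Function.update_eq_self a v]
      rw [show v a = inlUnit R u₀ * oneAddEps R r₀ from hdec]
      exact milnorSymbol_update_mul v a _ _
    have cond : ∀ (w : (DualNumber R)ˣ),
        ((∃ u : Rˣ, w = inlUnit R u) ∨ (∃ r : R, w = oneAddEps R r)) →
        ∀ i, i ∉ T → (∃ u : Rˣ, Function.update v a w i = inlUnit R u) ∨
          (∃ r : R, Function.update v a w i = oneAddEps R r) := by
      intro w hw i hi
      rcases eq_or_ne i a with rfl | hia
      · rw [Function.update_self]; exact hw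
      · rw [Function.update_of_ne hia]
        exact hv i (by simp [hia, hi])
    have h1 := ih (Function.update v a (inlUnit R u₀)) (cond _ (Or.inl ⟨u₀, rfl⟩))
    have h2 := ih (Function.update v a (oneAddEps R r₀)) (cond _ (Or.inr ⟨r₀, rfl⟩))
    rw [hsplit, map_add]
    exact AddSubgroup.add_mem _ h1 h2

theorem ker_le_closure_mixed :
    (pK R m).ker ≤ AddSubgroup.closure (mixedSet R m) := by
  have hrho : ∀ x : MilnorK (DualNumber R) m,
      rhoK R m x ∈ AddSubgroup.closure (mixedSet R m) := by
    intro x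
    have : x ∈ (AddSubgroup.closure (mixedSet R m)).comap (rhoK R m) := by
      induction x using QuotientAddGroup.induction_on with
      | H z =>
        induction z using FreeAbelianGroup.induction_on with
        | zero =>
          rw [QuotientAddGroup.mk_zero]
          exact AddSubgroup.zero_mem _
        | of f => exact rhoK_symbol_mem Finset.univ f (fun i hi => absurd (Finset.mem_univ i) hi)
        | neg f hf =>
          rw [QuotientAddGroup.mk_neg]
          exact AddSubgroup.neg_mem _ hf
        | add x y hx hy =>
          rw [QuotientAddGroup.mk_add]
          exact AddSubgroup.add_mem _ hx hy
    exact this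
  intro x hx
  have hker : pK R m x = 0 := hx
  have := hrho x
  rw [rhoK_apply, hker, map_zero, sub_zero] at this
  exact this

theorem ker_eq_closure_mixed :
    (pK R m).ker = AddSubgroup.closure (mixedSet R m) :=
  le_antisymm ker_le_closure_mixed
    ((AddSubgroup.closure_le _).mpr mixedSet_subset_ker)

end Generation
section Final

variable {R : Type*} [CommRing R] [Invertible (2 : R)] {m : ℕ}

variable (R m) in
/-- The automorphism of `K^M(R[ε])` induced by `ε ↦ 2ε`. -/
noncomputable def sigmaK : MilnorK (DualNumber R) m ≃+ MilnorK (DualNumber R) m :=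
  AddMonoidHom.toAddEquiv (MilnorK.map (epsScale R 2) m) (MilnorK.map (epsScale R (⅟2)) m)
    (by rw [MilnorK.map_comp, epsScale_comp, invOf_mul_self, epsScale_one, MilnorK.map_id])
    (by rw [MilnorK.map_comp, epsScale_comp, mul_invOf_self, epsScale_one, MilnorK.map_id])

theorem sigmaK_apply (x : MilnorK (DualNumber R) m) :
    sigmaK R m x = MilnorK.map (epsScale R 2) m x := rfl

theorem sigmaK_symm_apply (x : MilnorK (DualNumber R) m) :
    (sigmaK R m).symm x = MilnorK.map (epsScale R (⅟2)) m x := rfl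

theorem mixed_eigen : ∀ x ∈ mixedSet R m,
    ∃ k : ℕ, 1 ≤ k ∧ sigmaK R m x = (2 : ℤ) ^ k • x := by
  rintro x ⟨f, T, hne, hTε, hTl, rfl⟩
  refine ⟨T.card, Finset.card_pos.mpr hne, ?_⟩
  rw [sigmaK_apply, MilnorK.map_symbol]
  refine symbol_scale T f _ (fun i hi => ?_) (fun i hi => ?_)
  · obtain ⟨r, hr⟩ := hTε i hi
    refine ⟨r, hr, ?_⟩
    show Units.map _ (f i) = _
    rw [hr, epsScale_units_oneAddEps]
  · obtain ⟨u, hu⟩ := hTl i hi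
    show Units.map _ (f i) = f i
    rw [hu, epsScale_units_inlUnit]

theorem ker_symm_stable : ∀ x ∈ (pK R m).ker, (sigmaK R m).symm x ∈ (pK R m).ker := by
  intro x hx
  have hx0 : pK R m x = 0 := hx
  show pK R m ((sigmaK R m).symm x) = 0
  rw [sigmaK_symm_apply]
  have : (pK R m).comp (MilnorK.map (epsScale R (⅟2)) m) = pK R m := by
    rw [pK, MilnorK.map_comp, fstHom_comp_epsScale]
  calc pK R m (MilnorK.map (epsScale R (⅟2)) m x)
      = ((pK R m).comp (MilnorK.map (epsScale R (⅟2)) m)) x := rfl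
    _ = pK R m x := by rw [this]
    _ = 0 := hx0

end Final

/-- if `1/2 ∈ R`, the kernel `TK^M_{n+1}(R)` of the natural map
`K^M_{n+1}(R[ε]) → K^M_{n+1}(R)` induced by `ε ↦ 0` is uniquely 2-divisible. -/
theorem stmt_10 (R : Type*) [CommRing R] [Invertible (2 : R)] (n : ℕ) :
    Function.Bijective
      (fun x : (MilnorK.map (TrivSqZeroExt.fstHom R R R).toRingHom (n + 1)).ker =>
        (2 : ℤ) • x) :=
  abstract_two_divisible (sigmaK R (n + 1)) (mixedSet R (n + 1)) ((pK R (n + 1)).ker)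
    ker_eq_closure_mixed mixed_eigen ker_symm_stable
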